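/- Let X be a real Hilbert space and let T : X → X be a continuous linear nonexpansive operator with F := Fix T. Let (λ_n) be a sequence in [0,1] with ∑_{n∈ℕ} (1−λ_n)λ_n = +∞, let x_0 ∈ X, and define x_{n+1} := (1−λ_n)x_n + λ_n T x_n for all n. Then (x_n) converges strongly to P_F x_0, the orthogonal projection of x_0 onto F. -/

import Mathlib

open Filter Topology

section KMaux

variable {X : Type*} [NormedAddCommGroup X] [InnerProductSpace ℝ X]

private lemma km_step_norm (T : X →L[ℝ] X) (hT : ∀ x : X, ‖T x‖ ≤ ‖x‖)
    {l : ℝ} (h0 : 0 ≤ l) (h1 : l ≤ 1) (a : X) :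
    ‖(1 - l) • a + l • T a‖ ≤ ‖a‖ := by
  calc ‖(1 - l) • a + l • T a‖ ≤ ‖(1 - l) • a‖ + ‖l • T a‖ := norm_add_le _ _
    _ = (1 - l) * ‖a‖ + l * ‖T a‖ := by
        rw [norm_smul, norm_smul, Real.norm_eq_abs, Real.norm_eq_abs,
          abs_of_nonneg (by linarith), abs_of_nonneg h0]
    _ ≤ (1 - l) * ‖a‖ + l * ‖a‖ := by nlinarith [hT a, norm_nonneg a]
    _ = ‖a‖ := by ring

private lemma km_step_energy (T : X →L[ℝ] X) (hT : ∀ x : X, ‖T x‖ ≤ ‖x‖)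
    {l : ℝ} (h0 : 0 ≤ l) (h1 : l ≤ 1) (a : X) :
    l * (1 - l) * ‖a - T a‖ ^ 2 ≤ ‖a‖ ^ 2 - ‖(1 - l) • a + l • T a‖ ^ 2 := by
  have hb := hT a
  have hsq : ‖T a‖ ^ 2 ≤ ‖a‖ ^ 2 := by nlinarith [norm_nonneg (T a), norm_nonneg a]
  have h1' : ‖(1 - l) • a + l • T a‖ ^ 2
      = (1 - l) ^ 2 * ‖a‖ ^ 2 + 2 * ((1 - l) * l * (inner ℝ a (T a) : ℝ)) + l ^ 2 * ‖T a‖ ^ 2 := by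
    rw [norm_add_sq_real, real_inner_smul_left, real_inner_smul_right,
      norm_smul, norm_smul, Real.norm_eq_abs, Real.norm_eq_abs,
      abs_of_nonneg (by linarith : (0:ℝ) ≤ 1 - l), abs_of_nonneg h0]
    ring
  have h2 : ‖a - T a‖ ^ 2 = ‖a‖ ^ 2 - 2 * (inner ℝ a (T a) : ℝ) + ‖T a‖ ^ 2 :=
    norm_sub_sq_real a (T a)
  nlinarith

private lemma km_norm_antitone (T : X →L[ℝ] X) (hT : ∀ x : X, ‖T x‖ ≤ ‖x‖)
    (lam : ℕ → ℝ) (hlam : ∀ n, lam n ∈ Set.Icc (0 : ℝ) 1) (z : ℕ → X)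
    (hz : ∀ n, z (n + 1) = (1 - lam n) • z n + lam n • T (z n)) :
    Antitone fun n => ‖z n‖ :=
  antitone_nat_of_succ_le fun n => by
    rw [hz n]; exact km_step_norm T hT (hlam n).1 (hlam n).2 (z n)

private lemma km_diff (T : X →L[ℝ] X) (lam : ℕ → ℝ) (z : ℕ → X)
    (hz : ∀ n, z (n + 1) = (1 - lam n) • z n + lam n • T (z n)) :
    ∀ n, (fun n => z n - T (z n)) (n + 1)
      = (1 - lam n) • (z n - T (z n)) + lam n • T (z n - T (z n)) := by
  intro n
  simp only [hz n, map_add, map_smul, map_sub, smul_sub]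
  abel

private lemma km_sum_le (T : X →L[ℝ] X) (hT : ∀ x : X, ‖T x‖ ≤ ‖x‖)
    (lam : ℕ → ℝ) (hlam : ∀ n, lam n ∈ Set.Icc (0 : ℝ) 1) (z : ℕ → X)
    (hz : ∀ n, z (n + 1) = (1 - lam n) • z n + lam n • T (z n)) :
    ∀ n, ∑ k ∈ Finset.range n, lam k * (1 - lam k) * ‖z k - T (z k)‖ ^ 2
      ≤ ‖z 0‖ ^ 2 - ‖z n‖ ^ 2 := by
  intro n
  induction n with
  | zero => simp
  | succ n ih =>
    rw [Finset.sum_range_succ]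
    have h := km_step_energy T hT (hlam n).1 (hlam n).2 (z n)
    rw [← hz n] at h
    linarith

private lemma km_diff_small (T : X →L[ℝ] X) (hT : ∀ x : X, ‖T x‖ ≤ ‖x‖)
    (lam : ℕ → ℝ) (hlam : ∀ n, lam n ∈ Set.Icc (0 : ℝ) 1)
    (hdiv : ¬ Summable (fun n => (1 - lam n) * lam n)) (z : ℕ → X)
    (hz : ∀ n, z (n + 1) = (1 - lam n) • z n + lam n • T (z n))
    {ε : ℝ} (hε : 0 < ε) :
    ∃ N, ∀ n ≥ N, ‖z n - T (z n)‖ < ε := by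
  have hu := km_diff T lam z hz
  have hmono := km_norm_antitone T hT lam hlam (fun n => z n - T (z n)) hu
  rsuffices ⟨N, hN⟩ : ∃ N, ‖z N - T (z N)‖ < ε
  · exact ⟨N, fun n hn => lt_of_le_of_lt (hmono hn) hN⟩
  by_contra h
  push_neg at h
  apply hdiv
  apply summable_of_sum_range_le (c := ‖z 0‖ ^ 2 / ε ^ 2)
  · intro n
    have h1 := (hlam n).1
    have h2 := (hlam n).2
    nlinarith
  · intro n
    have hb := km_sum_le T hT lam hlam z hz n
    have hz2 : (0:ℝ) ≤ ‖z n‖ ^ 2 := by positivity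
    have hterm : (∑ k ∈ Finset.range n, (1 - lam k) * lam k) * ε ^ 2
        ≤ ∑ k ∈ Finset.range n, lam k * (1 - lam k) * ‖z k - T (z k)‖ ^ 2 := by
      rw [Finset.sum_mul]
      apply Finset.sum_le_sum
      intro k _
      have h1 := (hlam k).1
      have h2 := (hlam k).2
      have h3 := h k
      have hε2 : ε ^ 2 ≤ ‖z k - T (z k)‖ ^ 2 := by nlinarith
      have hnn : (0:ℝ) ≤ (1 - lam k) * lam k := by nlinarith
      nlinarith [mul_le_mul_of_nonneg_left hε2 hnn]
    rw [le_div_iff₀ (by positivity)]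
    linarith

end KMaux

/-- **Main result.** If `T` is a continuous linear nonexpansive operator on a real Hilbert
space, `(λₙ)` lies in `[0,1]` with `∑ (1-λₙ)λₙ = +∞`, and `xₙ₊₁ = (1-λₙ)xₙ + λₙ T xₙ`,
then `(xₙ)` converges strongly to the orthogonal projection of `x₀` onto
`F := Fix T = ker (Id - T)`. -/
theorem km_linear_strong_convergence
    {X : Type*} [NormedAddCommGroup X] [InnerProductSpace ℝ X] [CompleteSpace X]
    (T : X →L[ℝ] X) (hT : ∀ x : X, ‖T x‖ ≤ ‖x‖)
    (lam : ℕ → ℝ) (hlam : ∀ n, lam n ∈ Set.Icc (0 : ℝ) 1)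
    (hdiv : ¬ Summable (fun n => (1 - lam n) * lam n))
    (x : ℕ → X) (hx : ∀ n, x (n + 1) = (1 - lam n) • x n + lam n • T (x n)) :
    Tendsto x atTop
      (𝓝 (Submodule.orthogonalProjectionOnto (LinearMap.ker ((ContinuousLinearMap.id ℝ X - T : X →L[ℝ] X) : X →ₗ[ℝ] X)) (x 0) : X)) := by
  set A : X →L[ℝ] X := ContinuousLinearMap.id ℝ X - T with hA
  set F : Submodule ℝ X := LinearMap.ker (A : X →ₗ[ℝ] X) with hF
  set p : X := (F.orthogonalProjectionOnto (x 0) : X) with hp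
  -- `p` is a fixed point of `T`
  have hTp : T p = p := by
    have hm : p ∈ F := SetLike.coe_mem (F.orthogonalProjectionOnto (x 0))
    have : A p = 0 := hm
    have : p - T p = 0 := by
      simpa [hA, ContinuousLinearMap.sub_apply] using this
    exact (sub_eq_zero.mp this).symm
  -- the shifted sequence
  set y : ℕ → X := fun n => x n - p with hy
  have hyrec : ∀ n, y (n + 1) = (1 - lam n) • y n + lam n • T (y n) := by
    intro n
    show x (n + 1) - p = (1 - lam n) • (x n - p) + lam n • T (x n - p)
    rw [hx n, map_sub, hTp]
    module
  -- density: `y 0` lies in the closure of the range of `A`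
  have hy0 : y 0 ∈ closure ((LinearMap.range (A : X →ₗ[ℝ] X) : Submodule ℝ X) : Set X) := by
    have h1 : y 0 ∈ Fᗮ := Submodule.sub_starProjection_mem_orthogonal (K := F) (x 0)
    have hle : (LinearMap.range (A : X →ₗ[ℝ] X) : Submodule ℝ X)ᗮ ≤ F := by
      intro v hv
      have hfix : T v = v := by
        refine eq_of_norm_le_re_inner_eq_norm_sq (𝕜 := ℝ) (hT v) ?_
        have h0 : (inner ℝ (A v) v : ℝ) = 0 :=
          hv (A v) (LinearMap.mem_range_self _ v)
        have hAv : A v = v - T v := by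
          simp [hA, ContinuousLinearMap.sub_apply]
        rw [hAv, inner_sub_left, sub_eq_zero] at h0
        simpa [real_inner_self_eq_norm_sq] using h0.symm
      show A v = 0
      simp [hA, ContinuousLinearMap.sub_apply, hfix]
    have h2 : Fᗮ ≤ ((LinearMap.range (A : X →ₗ[ℝ] X) : Submodule ℝ X)ᗮ)ᗮ := Submodule.orthogonal_le hle
    have h3 := h2 h1
    rw [Submodule.orthogonal_orthogonal_eq_closure] at h3
    exact h3
  -- it suffices to show `y → 0`
  have hmain : Tendsto y atTop (𝓝 0) := by
    rw [Metric.tendsto_atTop]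
    intro ε hε
    -- approximate `y 0` by an element of the range of `A`
    obtain ⟨b, hb, hdist⟩ := Metric.mem_closure_iff.mp hy0 (ε / 2) (by linarith)
    obtain ⟨w0, rfl⟩ := hb
    -- auxiliary sequences
    set w : ℕ → X :=
      fun n => Nat.rec w0 (fun k zk => (1 - lam k) • zk + lam k • T zk) n with hwdef
    have hw : ∀ n, w (n + 1) = (1 - lam n) • w n + lam n • T (w n) := fun n => rfl
    set e : ℕ → X :=
      fun n => Nat.rec (y 0 - A w0) (fun k zk => (1 - lam k) • zk + lam k • T zk) n with hedef
    have he : ∀ n, e (n + 1) = (1 - lam n) • e n + lam n • T (e n) := fun n => rfl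
    have he0 : ‖e 0‖ < ε / 2 := by
      have : e 0 = y 0 - A w0 := rfl
      rw [this, ← dist_eq_norm]
      exact hdist
    have hAw0 : A w0 = w0 - T w0 := by simp [hA, ContinuousLinearMap.sub_apply]
    -- decomposition
    have hdecomp : ∀ n, y n = (w n - T (w n)) + e n := by
      intro n
      induction n with
      | zero =>
        have hw0 : w 0 = w0 := rfl
        have he0' : e 0 = y 0 - A w0 := rfl
        rw [hw0, he0', hAw0]
        abel
      | succ n ih =>
        rw [hyrec n, ih, hw n, he n]
        simp only [map_add, map_smul, map_sub, smul_add, smul_sub]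
        abel
    -- the `w`-difference term becomes small
    obtain ⟨N, hN⟩ := km_diff_small T hT lam hlam hdiv w hw (half_pos hε)
    refine ⟨N, fun n hn => ?_⟩
    rw [dist_zero_right, hdecomp n]
    have hee : ‖e n‖ ≤ ‖e 0‖ :=
      km_norm_antitone T hT lam hlam e he (Nat.zero_le n)
    calc ‖(w n - T (w n)) + e n‖ ≤ ‖w n - T (w n)‖ + ‖e n‖ := norm_add_le _ _
      _ < ε / 2 + ε / 2 := add_lt_add_of_lt_of_le (hN n hn) (le_trans hee he0.le)
      _ = ε := by ring
  have : Tendsto (fun n => y n + p) atTop (𝓝 (0 + p)) :=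
    hmain.add tendsto_const_nhds
  simpa [hy] using this
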